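/- Let e > 2 and let a, d be coprime nonnegative integers with e ≤ a, and let H be the numerical semigroup generated by the arithmetic sequence a, a+d, a+2d, …, a+(e−1)d. Set k = ⌊(a−2)/(e−1)⌋ and τ = a − k(e−1) − 1. Then Fr(H) = ak + d(a−1) and PF(H) = {Fr(H) − i·d : i = 0, 1, …, τ−1}; in particular the type of H equals τ. -/

import Mathlib

namespace NumSgp

/-- A numerical semigroup: an additive submonoid of ℕ with finite complement. -/
def IsNumSgp (H : Set ℕ) : Prop :=
  0 ∈ H ∧ (∀ a ∈ H, ∀ b ∈ H, a + b ∈ H) ∧ Hᶜ.Finite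

/-- Membership of an integer in (the image in ℤ of) `H ⊆ ℕ`. -/
def memZ (H : Set ℕ) (z : ℤ) : Prop := ∃ n ∈ H, (n : ℤ) = z

/-- The Frobenius number: the largest integer not in `H`. -/
noncomputable def frob (H : Set ℕ) : ℤ := sSup {z : ℤ | ¬ memZ H z}

/-- The pseudo-Frobenius numbers of `H`. -/
def pseudoFrob (H : Set ℕ) : Set ℤ :=
  {f : ℤ | ¬ memZ H f ∧ ∀ m ∈ H, m ≠ 0 → memZ H (f + (m : ℤ))}

/-- The canonical ideal `Ω_H = {-f + h : f ∈ PF(H), h ∈ H}`. -/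
def canIdeal (H : Set ℕ) : Set ℤ :=
  {z : ℤ | ∃ f ∈ pseudoFrob H, ∃ h ∈ H, z = -f + (h : ℤ)}

/-- The anti-canonical ideal `Ω_H⁻¹ = {x : x + Ω_H ⊆ H}`. -/
def antiCanIdeal (H : Set ℕ) : Set ℤ :=
  {x : ℤ | ∀ w ∈ canIdeal H, memZ H (x + w)}

/-- The trace of `H`: the sumset `Ω_H + Ω_H⁻¹`. -/
def trace (H : Set ℕ) : Set ℤ :=
  {z : ℤ | ∃ w ∈ canIdeal H, ∃ x ∈ antiCanIdeal H, z = w + x}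

/-- The conductor ideal `C_H = {x : x > Fr(H)}` (viewed inside ℤ). -/
noncomputable def condIdeal (H : Set ℕ) : Set ℤ := {z : ℤ | frob H < z}

/-- The residue of `H`: `|H ∖ tr(H)|`. -/
noncomputable def res (H : Set ℕ) : ℕ :=
  Set.ncard {h : ℕ | h ∈ H ∧ (h : ℤ) ∉ trace H}

/-- The number of gaps `g(H)`. -/
noncomputable def gaps (H : Set ℕ) : ℕ := Set.ncard Hᶜ

/-- The number of non-gaps below the Frobenius number, `n(H)`. -/
noncomputable def nongaps (H : Set ℕ) : ℕ :=
  Set.ncard {x : ℕ | x ∈ H ∧ (x : ℤ) < frob H}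

/-- `H` is symmetric if for all `x ∈ ℤ`, `x ∈ H` or `Fr(H) - x ∈ H`. -/
noncomputable def IsSymmetric (H : Set ℕ) : Prop :=
  ∀ z : ℤ, memZ H z ∨ memZ H (frob H - z)

/-- `H` is nearly Gorenstein if `M = H ∖ {0} ⊆ tr(H)`. -/
def NearlyGorenstein (H : Set ℕ) : Prop :=
  ∀ h ∈ H, h ≠ 0 → (h : ℤ) ∈ trace H

/-- The submonoid of ℕ generated by a set. -/
def genBy (A : Set ℕ) : Set ℕ := (AddSubmonoid.closure A : Set ℕ)

end NumSgp

open NumSgp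

namespace Stmt5

lemma mem_of_rep {e a d : ℕ} (he : 0 < e) (s t : ℕ) (h : t ≤ s * (e - 1)) :
    s * a + t * d ∈ genBy {x : ℕ | ∃ i < e, x = a + i * d} := by
  induction s generalizing t with
  | zero =>
    have ht : t = 0 := by simpa using h
    subst ht
    simpa [genBy] using (AddSubmonoid.zero_mem _ :
      (0 : ℕ) ∈ AddSubmonoid.closure {x : ℕ | ∃ i < e, x = a + i * d})
  | succ s ih =>
    have hb : t ≤ s * (e - 1) + (e - 1) := by rw [Nat.succ_mul] at h; exact h
    by_cases hc : t ≤ e - 1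
    · have h0 := ih 0 (Nat.zero_le _)
      have hg : a + t * d ∈ AddSubmonoid.closure {x : ℕ | ∃ i < e, x = a + i * d} :=
        AddSubmonoid.subset_closure ⟨t, by omega, rfl⟩
      have heq : (s + 1) * a + t * d = (a + t * d) + (s * a + 0 * d) := by ring
      rw [heq]
      exact AddSubmonoid.add_mem _ hg h0
    · obtain ⟨u, rfl⟩ : ∃ u, t = (e - 1) + u := ⟨t - (e - 1), by omega⟩
      have hu : u ≤ s * (e - 1) := by omega
      have hg : a + (e - 1) * d ∈ AddSubmonoid.closure {x : ℕ | ∃ i < e, x = a + i * d} :=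
        AddSubmonoid.subset_closure ⟨e - 1, by omega, rfl⟩
      have heq : (s + 1) * a + ((e - 1) + u) * d = (a + (e - 1) * d) + (s * a + u * d) := by ring
      rw [heq]
      exact AddSubmonoid.add_mem _ hg (ih u hu)

lemma mem_iff {e a d : ℕ} (he : 0 < e) (n : ℕ) :
    n ∈ genBy {x : ℕ | ∃ i < e, x = a + i * d} ↔
      ∃ s t : ℕ, t ≤ s * (e - 1) ∧ n = s * a + t * d := by
  constructor
  · intro hn
    have hn' : n ∈ AddSubmonoid.closure {x : ℕ | ∃ i < e, x = a + i * d} := hn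
    induction hn' using AddSubmonoid.closure_induction with
    | mem x hx =>
      obtain ⟨i, hi, rfl⟩ := hx
      exact ⟨1, i, by omega, by ring⟩
    | zero => exact ⟨0, 0, by omega, by ring⟩
    | add x y hx hy ihx ihy =>
      obtain ⟨s1, t1, h1, rfl⟩ := ihx hx
      obtain ⟨s2, t2, h2, rfl⟩ := ihy hy
      exact ⟨s1 + s2, t1 + t2, by rw [Nat.add_mul]; omega, by ring⟩
  · rintro ⟨s, t, h, rfl⟩
    exact mem_of_rep he s t h

lemma memZ_iff {e a d : ℕ} (he : 0 < e) (z : ℤ) :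
    memZ (genBy {x : ℕ | ∃ i < e, x = a + i * d}) z ↔
      ∃ s t : ℕ, t ≤ s * (e - 1) ∧ z = (s : ℤ) * a + t * d := by
  constructor
  · rintro ⟨n, hn, rfl⟩
    obtain ⟨s, t, h, rfl⟩ := (mem_iff he n).mp hn
    exact ⟨s, t, h, by push_cast; ring⟩
  · rintro ⟨s, t, h, rfl⟩
    exact ⟨s * a + t * d, (mem_iff he _).mpr ⟨s, t, h, rfl⟩, by push_cast; ring⟩


/-- If `0 < a`, `a ∣ δ`, `-a < δ < a` then `δ = 0`. -/
lemma dvd_small_eq_zero {a : ℕ} (ha : 0 < a) {δ : ℤ} (h1 : -(a:ℤ) < δ) (h2 : δ < a)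
    (h3 : (a:ℤ) ∣ δ) : δ = 0 := by
  obtain ⟨q, rfl⟩ := h3
  rcases lt_trichotomy q 0 with h | h | h
  · nlinarith [Int.natCast_pos.mpr ha]
  · simp [h]
  · nlinarith [Int.natCast_pos.mpr ha]

/-- Every integer has a residue class `t < a` with `a ∣ z - t*d`, when `gcd a d = 1`. -/
lemma exists_class {a d : ℕ} (ha : 0 < a) (hcop : Nat.Coprime a d) (z : ℤ) :
    ∃ t : ℕ, t < a ∧ (a : ℤ) ∣ z - t * d := by
  have hb := Nat.gcd_eq_gcd_ab a d
  rw [hcop] at hb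
  push_cast at hb
  set u := Nat.gcdA a d
  set v := Nat.gcdB a d
  have h1 : 0 ≤ (z * v) % a := Int.emod_nonneg _ (by exact_mod_cast ha.ne')
  have h2 : (z * v) % a < a := Int.emod_lt_of_pos _ (by exact_mod_cast ha)
  refine ⟨((z * v) % a).toNat, by omega, ?_⟩
  have ht : (((z * v) % a).toNat : ℤ) = (z * v) % a := Int.toNat_of_nonneg h1
  rw [ht]
  have hm : (a:ℤ) ∣ z * v - (z * v) % a := Int.dvd_self_sub_of_emod_eq rfl
  obtain ⟨q, hq⟩ := hm
  refine ⟨z * u + q * d, ?_⟩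
  have hmod : (z*v) % a = z * v - a * q := by linarith
  rw [hmod]
  linear_combination z * hb

/-- Uniqueness of classes. -/
lemma class_unique {a d : ℕ} (hcop : Nat.Coprime a d) {t t' : ℕ} (ht : t < a) (ht' : t' < a)
    (h : (a : ℤ) ∣ (t : ℤ) * d - t' * d) : t = t' := by
  have ha : 0 < a := by omega
  have hb := Nat.gcd_eq_gcd_ab a d
  rw [hcop] at hb
  have hco : IsCoprime (a : ℤ) (d : ℤ) := ⟨Nat.gcdA a d, Nat.gcdB a d, by push_cast at hb ⊢; linarith⟩
  have h2 : (a : ℤ) ∣ ((t : ℤ) - t') * d := by rw [sub_mul]; exact h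
  have h3 : (a : ℤ) ∣ (t : ℤ) - t' := hco.dvd_of_dvd_mul_right h2
  have := dvd_small_eq_zero ha (by push_cast; omega) (by push_cast; omega) h3
  omega

/-- ceiling division `⌈t/(e-1)⌉` as used below. -/
def cl (e t : ℕ) : ℕ := (t + e - 2) / (e - 1)

lemma cl_spec {e : ℕ} (he : 2 ≤ e) (t : ℕ) : t ≤ cl e t * (e - 1) := by
  have h := Nat.div_add_mod (t + e - 2) (e - 1)
  rw [Nat.mul_comm] at h
  have h2 : (t + e - 2) % (e - 1) < e - 1 := Nat.mod_lt _ (by omega)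
  unfold cl
  omega

lemma cl_min {e : ℕ} (he : 2 ≤ e) {t s : ℕ} (h : t ≤ s * (e - 1)) : cl e t ≤ s := by
  have h3 : (s + 1) * (e - 1) = s * (e-1) + (e-1) := by ring
  have h4 : t + e - 2 < (s + 1) * (e - 1) := by omega
  have := (Nat.div_lt_iff_lt_mul (by omega : 0 < e - 1)).mpr h4
  unfold cl
  omega

lemma cl_eq {e : ℕ} (he : 2 ≤ e) {t q : ℕ} (h1 : q * (e - 1) < t) (h2 : t ≤ (q + 1) * (e - 1)) :
    cl e t = q + 1 := by
  have e1 : (q+1) * (e-1) = q*(e-1) + (e-1) := by ring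
  have e2 : (q+1+1) * (e-1) = q*(e-1) + (e-1) + (e-1) := by ring
  apply Nat.div_eq_of_lt_le <;> omega

lemma cl_mono {e : ℕ} (he : 2 ≤ e) {t t' : ℕ} (h : t ≤ t') : cl e t ≤ cl e t' :=
  Nat.div_le_div_right (by omega)

/-- The key criterion: for `z` in class `t < a`, membership is equivalent to `W t ≤ z`. -/
lemma crit {e a d : ℕ} (he : 2 ≤ e) (ha : 0 < a) (hcop : Nat.Coprime a d)
    {t : ℕ} (ht : t < a) {z : ℤ} (hz : (a : ℤ) ∣ z - t * d) :
    memZ (genBy {x : ℕ | ∃ i < e, x = a + i * d}) z ↔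
      (cl e t : ℤ) * a + t * d ≤ z := by
  constructor
  · intro hm
    obtain ⟨s, t', h1, hzeq⟩ := (memZ_iff (by omega) _).mp hm
    obtain ⟨s2, t2, ht2a, h12, hrep⟩ :
        ∃ s2 t2 : ℕ, t2 < a ∧ t2 ≤ s2 * (e - 1) ∧ z = (s2 : ℤ) * a + t2 * d := by
      refine ⟨s + t' / a * d, t' % a, Nat.mod_lt _ ha, ?_, ?_⟩
      · calc t' % a ≤ t' := Nat.mod_le _ _
          _ ≤ s * (e-1) := h1
          _ ≤ (s + t' / a * d) * (e-1) := Nat.mul_le_mul_right _ (by omega)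
      · have hdm : a * (t' / a) + t' % a = t' := Nat.div_add_mod t' a
        obtain ⟨D, M, hD, hM⟩ : ∃ D M : ℕ, t' / a = D ∧ t' % a = M := ⟨_, _, rfl, rfl⟩
        rw [hzeq, hD, hM]
        rw [hD, hM] at hdm
        have hdmz : (a:ℤ) * D + (M:ℤ) = (t' : ℤ) := by exact_mod_cast hdm
        push_cast
        linear_combination (-(d:ℤ)) * hdmz
    have hz2 : (a:ℤ) ∣ z - t2 * d := by rw [hrep]; exact ⟨s2, by ring⟩
    have hcl : (a:ℤ) ∣ (t:ℤ)*d - t2*d := by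
      have h7 := dvd_sub hz2 hz
      have heq : z - t2*d - (z - t*d) = (t:ℤ)*d - t2*d := by ring
      rwa [heq] at h7
    obtain rfl := class_unique hcop ht ht2a hcl
    have hs2c : cl e t ≤ s2 := cl_min he h12
    rw [hrep]
    have hmul : (cl e t : ℤ) * a ≤ (s2:ℤ) * a :=
      mul_le_mul_of_nonneg_right (by exact_mod_cast hs2c) (by positivity)
    linarith
  · intro hle
    have hdvd : (a : ℤ) ∣ z - ((cl e t : ℤ) * a + t * d) := by
      have h1 : z - ((cl e t : ℤ) * a + t * d) = (z - t * d) - (cl e t : ℤ) * a := by ring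
      rw [h1]
      exact dvd_sub hz ⟨cl e t, by ring⟩
    obtain ⟨q, hq⟩ := hdvd
    have hq0 : 0 ≤ q := by nlinarith [Int.natCast_pos.mpr ha]
    obtain ⟨m, rfl⟩ : ∃ m : ℕ, (m : ℤ) = q := ⟨q.toNat, Int.toNat_of_nonneg hq0⟩
    refine (memZ_iff (by omega) _).mpr ⟨cl e t + m, t, ?_, ?_⟩
    · calc t ≤ cl e t * (e-1) := cl_spec he t
        _ ≤ (cl e t + m) * (e-1) := Nat.mul_le_mul_right _ (by omega)
    · push_cast
      linarith

lemma dvd_lower {a : ℕ} (ha : 0 < a) {δ : ℤ} (h1 : -(a:ℤ) < δ) (h3 : (a:ℤ) ∣ δ) : 0 ≤ δ := by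
  obtain ⟨q, rfl⟩ := h3
  rcases le_or_gt 0 q with h | h
  · positivity
  · nlinarith [Int.natCast_pos.mpr ha]

lemma memZ_add_mem {A : Set ℕ} {z : ℤ} (hz : memZ (genBy A) z) {n : ℕ} (hn : n ∈ genBy A) :
    memZ (genBy A) (z + n) := by
  obtain ⟨m, hm, rfl⟩ := hz
  exact ⟨m + n, AddSubmonoid.add_mem _ hm hn, by push_cast; ring⟩

lemma cl_add {e : ℕ} (he : 2 ≤ e) (t : ℕ) : cl e (t + (e - 1)) = cl e t + 1 := by
  have h : t + (e - 1) + e - 2 = (t + e - 2) + (e - 1) := by omega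
  unfold cl
  rw [h, Nat.add_div_right _ (by omega : 0 < e - 1)]

end Stmt5

open Stmt5

set_option maxHeartbeats 1000000 in
/-- for `H` generated by the arithmetic sequence `a, a+d, …, a+(e-1)d`
with `gcd(a,d) = 1`, `2 < e ≤ a`, `k = ⌊(a-2)/(e-1)⌋` and `τ = a - k(e-1) - 1`, one has
`Fr(H) = ak + d(a-1)`, `PF(H) = {Fr(H) - i·d : 0 ≤ i ≤ τ-1}` and `type(H) = τ`. -/
theorem stmt_5 (e a d : ℕ) (he : 2 < e) (hcop : Nat.Coprime a d) (hea : e ≤ a)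
    (H : Set ℕ) (hH : H = genBy {x : ℕ | ∃ i < e, x = a + i * d})
    (k τ : ℕ) (hk : k = (a - 2) / (e - 1)) (hτ : τ = a - k * (e - 1) - 1) :
    frob H = (a : ℤ) * k + d * (a - 1) ∧
    pseudoFrob H = {z : ℤ | ∃ i < τ, z = frob H - (i : ℤ) * d} ∧
    (pseudoFrob H).ncard = τ := by
  subst hH
  have he2 : 2 ≤ e := by omega
  have ha : 0 < a := by omega
  have hd : 1 ≤ d := by
    rcases Nat.eq_zero_or_pos d with h | h
    · exfalso
      have := hcop
      rw [h, Nat.coprime_zero_right] at this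
      omega
    · exact h
  -- arithmetic facts about k and τ
  have hdm := Nat.div_add_mod (a-2) (e-1)
  rw [Nat.mul_comm, ← hk] at hdm
  have hrr : (a-2) % (e-1) < e - 1 := Nat.mod_lt _ (by omega)
  have hkexp : (k+1) * (e-1) = k*(e-1) + (e-1) := by ring
  have hτ1 : 1 ≤ τ := by omega
  have hτE : τ ≤ e - 1 := by omega
  have ha1 : a - 1 = k * (e-1) + τ := by omega
  set F : ℤ := (a : ℤ) * k + d * ((a:ℤ) - 1) with hF
  have hcl1 : cl e (a-1) = k + 1 := cl_eq he2 (by omega) (by omega)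
  -- F is not in H
  have hFdvd : (a : ℤ) ∣ F - ((a-1 : ℕ) : ℤ) * d := by
    have hc : ((a-1:ℕ):ℤ) = (a:ℤ) - 1 := by omega
    exact ⟨k, by rw [hc, hF]; ring⟩
  have hFnot : ¬ memZ (genBy {x : ℕ | ∃ i < e, x = a + i * d}) F := by
    rw [crit he2 ha hcop (by omega : a - 1 < a) hFdvd, hcl1]
    have hc : ((a-1:ℕ):ℤ) = (a:ℤ) - 1 := by omega
    push_cast
    rw [hc]
    intro hcon
    have : (0:ℤ) < a := by exact_mod_cast ha
    linarith
  -- everything above F is in H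
  have habove : ∀ z : ℤ, F < z → memZ (genBy {x : ℕ | ∃ i < e, x = a + i * d}) z := by
    intro z hz
    obtain ⟨t, ht, hdvd⟩ := exists_class ha hcop z
    have hclt : cl e t ≤ k + 1 := by
      rw [← hcl1]; exact cl_mono he2 (by omega)
    have haz : (0:ℤ) < a := by exact_mod_cast ha
    have hWb : (cl e t : ℤ) * a + t * d ≤ F + a := by
      have h1 : (cl e t : ℤ) * a ≤ ((k:ℤ)+1) * a := by
        apply mul_le_mul_of_nonneg_right _ (le_of_lt haz)
        exact_mod_cast hclt
      have h2 : (t:ℤ) * d ≤ ((a:ℤ)-1) * d := by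
        apply mul_le_mul_of_nonneg_right _ (by positivity)
        have : (t:ℤ) ≤ (a:ℤ) - 1 := by omega
        exact this
      rw [hF]; linarith
    have hdW : (a:ℤ) ∣ z - ((cl e t : ℤ) * a + t * d) := by
      have h1 : z - ((cl e t : ℤ) * a + t * d) = (z - t * d) - (cl e t : ℤ) * a := by ring
      rw [h1]; exact dvd_sub hdvd ⟨cl e t, by ring⟩
    have h0 : 0 ≤ z - ((cl e t : ℤ) * a + t * d) := dvd_lower ha (by linarith) hdW
    exact (crit he2 ha hcop ht hdvd).mpr (by linarith)
  -- frob = F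
  have hfrob : frob (genBy {x : ℕ | ∃ i < e, x = a + i * d}) = F := by
    apply IsGreatest.csSup_eq
    constructor
    · exact hFnot
    · intro z hz
      by_contra hcon
      push_neg at hcon
      exact hz (habove z hcon)
  -- generators are in H
  have hgen : ∀ j < e, a + j * d ∈ genBy {x : ℕ | ∃ i < e, x = a + i * d} := by
    intro j hj
    exact (mem_iff (by omega) _).mpr ⟨1, j, by omega, by ring⟩
  -- PF ⊇
  have hsup : ∀ i < τ, (F - (i:ℤ) * d) ∈ pseudoFrob (genBy {x : ℕ | ∃ i < e, x = a + i * d}) := by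
    intro i hi
    have hia : i + 1 ≤ a - 1 := by omega
    have htc : ((a-1-i : ℕ) : ℤ) = (a:ℤ) - 1 - i := by omega
    have hclv : cl e (a-1-i) = k + 1 := cl_eq he2 (by omega) (by omega)
    have hdvd2 : (a:ℤ) ∣ (F - (i:ℤ)*d) - ((a-1-i:ℕ):ℤ) * d :=
      ⟨k, by rw [htc, hF]; ring⟩
    constructor
    · rw [crit he2 ha hcop (by omega : a - 1 - i < a) hdvd2, hclv, htc]
      intro hcon
      have haz : (0:ℤ) < a := by exact_mod_cast ha
      push_cast at hcon
      rw [hF] at hcon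
      linarith
    · -- f + generator ∈ H
      have hgenmem : ∀ j < e,
          memZ (genBy {x : ℕ | ∃ i < e, x = a + i * d}) (F - (i:ℤ)*d + ((a + j*d : ℕ) : ℤ)) := by
        intro j hj
        rcases le_or_gt j i with hji | hij
        · refine (memZ_iff (by omega) _).mpr ⟨k+1, a-1-i+j, by omega, ?_⟩
          have hc2 : ((a-1-i+j:ℕ):ℤ) = (a:ℤ)-1-i+j := by omega
          rw [hc2, hF]; push_cast; ring
        · refine (memZ_iff (by omega) _).mpr ⟨k+1+d, j-i-1, ?_, ?_⟩
          · have hde : (k+1+d)*(e-1) = k*(e-1) + (e-1) + d*(e-1) := by ring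
            have hd0 : 0 ≤ d*(e-1) := Nat.zero_le _
            omega
          · have hc3 : ((j-i-1:ℕ):ℤ) = (j:ℤ)-i-1 := by omega
            rw [hc3, hF]; push_cast; ring
      intro m hm hm0
      have key : ∀ x (hx : x ∈ AddSubmonoid.closure {x : ℕ | ∃ i < e, x = a + i * d}),
          x = 0 ∨ memZ (genBy {x : ℕ | ∃ i < e, x = a + i * d}) (F - (i:ℤ)*d + x) := by
        intro x hx
        induction hx using AddSubmonoid.closure_induction with
        | mem y hy =>
          obtain ⟨j, hj, rfl⟩ := hy
          exact Or.inr (hgenmem j hj)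
        | zero => exact Or.inl rfl
        | add x y hx hy ihx ihy =>
          rcases ihx with rfl | hmx
          · simpa using ihy
          · right
            have hyH : y ∈ genBy {x : ℕ | ∃ i < e, x = a + i * d} := hy
            have := memZ_add_mem hmx hyH
            have heq : F - (i:ℤ)*d + ↑x + ↑y = F - (i:ℤ)*d + ↑(x + y) := by push_cast; ring
            rwa [heq] at this
      rcases key m hm with rfl | h
      · exact absurd rfl hm0
      · exact h
  -- PF ⊆
  have hsub : ∀ f ∈ pseudoFrob (genBy {x : ℕ | ∃ i < e, x = a + i * d}),
      ∃ i < τ, f = F - (i:ℤ)*d := by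
    rintro f ⟨hf1, hf2⟩
    obtain ⟨t, ht, hdvd⟩ := exists_class ha hcop f
    have haz : (0:ℤ) < a := by exact_mod_cast ha
    have hlt : f < (cl e t : ℤ) * a + t * d := by
      by_contra hcon
      push_neg at hcon
      exact hf1 ((crit he2 ha hcop ht hdvd).mpr hcon)
    have hfa : memZ (genBy {x : ℕ | ∃ i < e, x = a + i * d}) (f + a) := by
      have := hf2 a ((mem_iff (by omega) a).mpr ⟨1, 0, by omega, by ring⟩) (by omega)
      exact this
    have hdvd2 : (a:ℤ) ∣ (f + a) - t * d := by
      have h1 : (f + (a:ℤ)) - t*d = (f - t*d) + a := by ring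
      rw [h1]; exact dvd_add hdvd ⟨1, by ring⟩
    have hge : (cl e t : ℤ) * a + t * d ≤ f + a := (crit he2 ha hcop ht hdvd2).mp hfa
    have hfeq : f = (cl e t : ℤ) * a + t * d - a := by
      have hdW : (a:ℤ) ∣ f - ((cl e t : ℤ) * a + t * d - a) := by
        have h1 : f - ((cl e t : ℤ) * a + t * d - a) = (f - t*d) - ((cl e t : ℤ) - 1) * a := by
          ring
        rw [h1]; exact dvd_sub hdvd ⟨(cl e t : ℤ) - 1, by ring⟩
      have := dvd_small_eq_zero ha (by linarith) (by linarith) hdW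
      linarith
    -- comparison of ceilings via generators
    have hcomp : ∀ j < e, t + j ≤ a - 1 → cl e (t + j) ≤ cl e t := by
      intro j hj hja
      have hmem := hf2 (a + j*d) (hgen j hj) (by omega)
      have hzeq : f + ((a + j*d : ℕ):ℤ) = (cl e t : ℤ) * a + ((t+j:ℕ):ℤ) * d := by
        rw [hfeq]; push_cast; ring
      have hdvd3 : (a:ℤ) ∣ (f + ((a + j*d : ℕ):ℤ)) - ((t+j:ℕ):ℤ) * d := by
        rw [hzeq]; exact ⟨cl e t, by ring⟩
      have := (crit he2 ha hcop (by omega : t + j < a) hdvd3).mp (hmem)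
      rw [hzeq] at this
      have h5 : (cl e (t+j) : ℤ) * a ≤ (cl e t : ℤ) * a := by linarith
      have h6 : (cl e (t+j) : ℤ) ≤ (cl e t : ℤ) := le_of_mul_le_mul_right h5 haz
      exact_mod_cast h6
    have htlow : k * (e-1) + 1 ≤ t := by
      rcases le_or_gt (e-1) (a-1-t) with hcase | hcase
      · exfalso
        have h7 := hcomp (e-1) (by omega) (by omega)
        rw [cl_add he2 t] at h7
        omega
      · have h7 := hcomp (a-1-t) (by omega) (by omega)
        have h8 : t + (a-1-t) = a - 1 := by omega
        rw [h8, hcl1] at h7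
        by_contra hcon
        push_neg at hcon
        have := cl_min he2 (show t ≤ k * (e-1) by omega)
        omega
    have hclv : cl e t = k + 1 := cl_eq he2 (by omega) (by omega)
    refine ⟨a - 1 - t, by omega, ?_⟩
    rw [hfeq, hclv, hF]
    have hc : ((a-1-t:ℕ):ℤ) = (a:ℤ) - 1 - t := by omega
    rw [hc]
    push_cast
    ring
  refine ⟨hfrob, ?_, ?_⟩
  · rw [hfrob]
    ext z
    simp only [Set.mem_setOf_eq]
    constructor
    · intro hz; exact hsub z hz
    · rintro ⟨i, hi, rfl⟩; exact hsup i hi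
  · have hinj : Function.Injective (fun i : ℕ => F - (i:ℤ)*d) := by
      intro x y hxy
      simp only at hxy
      have hdz : (0:ℤ) < d := by exact_mod_cast hd
      have : (x:ℤ) * d = (y:ℤ) * d := by linarith
      have := mul_right_cancel₀ (by positivity : (d:ℤ) ≠ 0) this
      exact_mod_cast this
    have hset : pseudoFrob (genBy {x : ℕ | ∃ i < e, x = a + i * d}) =
        ↑((Finset.range τ).image fun i : ℕ => F - (i:ℤ)*d) := by
      ext z
      simp only [Finset.coe_image, Finset.coe_range, Set.mem_image, Set.mem_Iio]
      constructor
      · intro hz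
        obtain ⟨i, hi, rfl⟩ := hsub z hz
        exact ⟨i, hi, rfl⟩
      · rintro ⟨i, hi, rfl⟩
        exact hsup i hi
    rw [hset, Set.ncard_coe_finset, Finset.card_image_of_injective _ hinj, Finset.card_range]
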